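/- Let q₁, q₂ be differentiable at t > 0 and suppose μ²/s² − λ² ≠ 0 for all s in a neighborhood of t, so that Q(s,λ) = (μ/s)·J − λ·I is invertible there (and (d/ds)(Q(s,λ)^{−1}) = Q(s,λ)^{−2}·(μ/s²)·J). Then L(t,λ) := (d/dt)(Q(t,λ)^{−1}·Q(t)) + Q(t,λ)^{−1}·(Q(t)·B·Q(t) + Q(t)·B·Q(t,λ) + Q(t,λ)·B·Q(t)) equals Q(t,λ)^{−1}·(Q′(t) − (q₁(t)² + q₂(t)²)·B) + Q(t,λ)^{−1}·(μ/t)·( Q(t,λ)^{−1}·(1/t)·J·Q(t) − 2·q₂(t)·B ). -/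

import Mathlib

open Complex Matrix Filter

attribute [local instance] Matrix.linftyOpNormedRing Matrix.linftyOpNormedAlgebra

noncomputable def Bmat : Matrix (Fin 2) (Fin 2) ℂ := !![0, 1; -1, 0]
noncomputable def Jmat : Matrix (Fin 2) (Fin 2) ℂ := !![0, 1; 1, 0]
noncomputable def Kmat : Matrix (Fin 2) (Fin 2) ℂ := !![1, 0; 0, -1]

/-- `Q(t) = q₁(t) K + q₂(t) J`. -/
noncomputable def Qm (q₁ q₂ : ℝ → ℂ) (t : ℝ) : Matrix (Fin 2) (Fin 2) ℂ :=
  q₁ t • Kmat + q₂ t • Jmat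

/-- `Q(t,λ) = (μ/t) J − λ I`. -/
noncomputable def Qlam (μ : ℂ) (t : ℝ) (lam : ℂ) : Matrix (Fin 2) (Fin 2) ℂ :=
  (μ / (t : ℂ)) • Jmat - lam • (1 : Matrix (Fin 2) (Fin 2) ℂ)

theorem stmt17 (μ lam : ℂ) (q₁ q₂ : ℝ → ℂ) (t : ℝ) (ht : 0 < t)
    (hq₁ : DifferentiableAt ℝ q₁ t) (hq₂ : DifferentiableAt ℝ q₂ t)
    (hreg : ∀ᶠ s in nhds t, μ ^ 2 / (s : ℂ) ^ 2 - lam ^ 2 ≠ 0) :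
    deriv (fun s : ℝ => (Qlam μ s lam)⁻¹ * Qm q₁ q₂ s) t +
      (Qlam μ t lam)⁻¹ *
        (Qm q₁ q₂ t * Bmat * Qm q₁ q₂ t + Qm q₁ q₂ t * Bmat * Qlam μ t lam +
          Qlam μ t lam * Bmat * Qm q₁ q₂ t) =
    (Qlam μ t lam)⁻¹ *
        ((deriv q₁ t • Kmat + deriv q₂ t • Jmat) -
          (q₁ t ^ 2 + q₂ t ^ 2) • Bmat) +
      (μ / (t : ℂ)) • ((Qlam μ t lam)⁻¹ *
        ((1 / (t : ℂ)) • ((Qlam μ t lam)⁻¹ * Jmat * Qm q₁ q₂ t) -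
          (2 * q₂ t) • Bmat)) := by
  have htC : (t : ℂ) ≠ 0 := by exact_mod_cast ht.ne'
  set A := Qlam μ t lam with hA
  set f := Qm q₁ q₂ t with hf
  set P := (Qlam μ t lam)⁻¹ with hP
  -- explicit forms
  have hAE : A = !![-lam, μ / (t : ℂ); μ / (t : ℂ), -lam] := by
    rw [hA]
    ext i j
    fin_cases i <;> fin_cases j <;>
      simp [Qlam, Jmat, Matrix.sub_apply, Matrix.smul_apply, Matrix.one_apply]
  have hfE : f = !![q₁ t, q₂ t; q₂ t, -q₁ t] := by
    rw [hf]
    ext i j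
    fin_cases i <;> fin_cases j <;>
      simp [Qm, Jmat, Kmat, Matrix.add_apply, Matrix.smul_apply]
  -- determinant and invertibility
  have hdet : (Qlam μ t lam).det = -(μ ^ 2 / (t : ℂ) ^ 2 - lam ^ 2) := by
    rw [← hA, hAE, Matrix.det_fin_two_of]
    ring
  have hdet0 : IsUnit (Qlam μ t lam).det := by
    rw [hdet, isUnit_iff_ne_zero]
    exact neg_ne_zero.mpr hreg.self_of_nhds
  have hPA : P * A = 1 := Matrix.nonsing_inv_mul _ hdet0
  have hAP : A * P = 1 := Matrix.mul_nonsing_inv _ hdet0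
  -- J commutes with Qlam, hence with its inverse
  have hJA : A * Jmat = Jmat * A := by
    rw [hAE]
    ext i j
    fin_cases i <;> fin_cases j <;>
      simp [Jmat, Matrix.mul_apply, Fin.sum_univ_two]
  have hJP : P * Jmat = Jmat * P := by
    calc P * Jmat = P * Jmat * (A * P) := by rw [hAP, mul_one]
    _ = P * (Jmat * A) * P := by noncomm_ring
    _ = P * (A * Jmat) * P := by rw [hJA]
    _ = (P * A) * (Jmat * P) := by noncomm_ring
    _ = Jmat * P := by rw [hPA, one_mul]
  -- derivative of Qlam
  have hderivA : HasDerivAt (fun s : ℝ => Qlam μ s lam) ((-(μ / (t : ℂ) ^ 2)) • Jmat) t := by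
    have h1 : HasDerivAt (fun z : ℂ => μ / z) (-(μ / (t : ℂ) ^ 2)) (t : ℂ) := by
      have := (hasDerivAt_inv htC).const_mul μ
      simpa [div_eq_mul_inv, mul_comm, mul_left_comm] using this
    have h2 : HasDerivAt (fun s : ℝ => μ / (s : ℂ)) (-(μ / (t : ℂ) ^ 2)) t :=
      h1.comp_ofReal
    exact (h2.smul_const Jmat).sub_const (lam • 1)
  -- derivative of the inverse
  have huA : IsUnit A := (Matrix.isUnit_iff_isUnit_det _).mpr hdet0
  have hderivInv : HasDerivAt (fun s : ℝ => (Qlam μ s lam)⁻¹)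
      (-(P * ((-(μ / (t : ℂ) ^ 2)) • Jmat) * P)) t := by
    have hcoe : ((huA.unit⁻¹ : (Matrix (Fin 2) (Fin 2) ℂ)ˣ) : Matrix (Fin 2) (Fin 2) ℂ) = P := by
      rw [hP, Matrix.nonsing_inv_eq_ringInverse, ← Ring.inverse_unit huA.unit, huA.unit_spec]
    have hF := hasFDerivAt_ringInverse (𝕜 := ℝ) huA.unit
    rw [huA.unit_spec, hcoe] at hF
    have := hF.comp_hasDerivAt t hderivA
    simp only [Matrix.nonsing_inv_eq_ringInverse]
    exact this.congr_deriv (by simp [ContinuousLinearMap.mulLeftRight_apply])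
  -- derivative of Qm
  have hderivf : HasDerivAt (fun s : ℝ => Qm q₁ q₂ s)
      (deriv q₁ t • Kmat + deriv q₂ t • Jmat) t := by
    exact (hq₁.hasDerivAt.smul_const Kmat).add (hq₂.hasDerivAt.smul_const Jmat)
  -- derivative of the product
  have hderivProd : deriv (fun s : ℝ => (Qlam μ s lam)⁻¹ * Qm q₁ q₂ s) t =
      (-(P * ((-(μ / (t : ℂ) ^ 2)) • Jmat) * P)) * f +
        P * (deriv q₁ t • Kmat + deriv q₂ t • Jmat) :=
    (hderivInv.mul hderivf).deriv
  -- the key algebraic identity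
  have hkey : f * Bmat * f + f * Bmat * A + A * Bmat * f =
      (-(q₁ t ^ 2 + q₂ t ^ 2) - μ / (t : ℂ) * (2 * q₂ t)) • Bmat := by
    rw [hfE, hAE]
    ext i j
    fin_cases i <;> fin_cases j <;>
      simp [Bmat, Matrix.mul_apply, Fin.sum_univ_two, Matrix.smul_apply] <;>
      ring
  rw [hderivProd, mul_add, hkey]
  -- now pure (noncommutative) algebra with the commuting relation hJP
  have h5 : P * Jmat * P = P * P * Jmat := by
    rw [mul_assoc, ← hJP, ← mul_assoc]
  have e1 : -(P * ((-(μ / (t : ℂ) ^ 2)) • Jmat) * P) * f =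
      (μ / (t : ℂ) * (1 / (t : ℂ))) • (P * (P * Jmat * f)) := by
    have hsc : μ / (t : ℂ) * (1 / (t : ℂ)) = μ / (t : ℂ) ^ 2 := by
      rw [div_mul_div_comm, mul_one, ← sq]
    rw [hsc]
    calc -(P * ((-(μ / (t : ℂ) ^ 2)) • Jmat) * P) * f
        = (μ / (t : ℂ) ^ 2) • (P * Jmat * P * f) := by
          simp only [mul_neg, neg_mul, neg_neg, Matrix.mul_smul, Matrix.smul_mul, neg_smul]
      _ = (μ / (t : ℂ) ^ 2) • (P * (P * Jmat * f)) := by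
          rw [h5]; congr 1; noncomm_ring
  rw [e1]
  have e2 : P * ((-(q₁ t ^ 2 + q₂ t ^ 2) - μ / (t : ℂ) * (2 * q₂ t)) • Bmat) =
      -((q₁ t ^ 2 + q₂ t ^ 2) • (P * Bmat)) - (μ / (t : ℂ)) • ((2 * q₂ t) • (P * Bmat)) := by
    rw [Matrix.mul_smul, sub_smul, neg_smul, ← smul_smul]
  rw [e2]
  have e3 : (μ / (t : ℂ)) • (P * ((1 / (t : ℂ)) • (P * Jmat * f) - (2 * q₂ t) • Bmat)) =
      (μ / (t : ℂ) * (1 / (t : ℂ))) • (P * (P * Jmat * f)) -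
        (μ / (t : ℂ)) • ((2 * q₂ t) • (P * Bmat)) := by
    rw [Matrix.mul_sub, Matrix.mul_smul, Matrix.mul_smul, smul_sub, smul_smul]
  rw [e3]
  simp only [Matrix.mul_add, Matrix.mul_sub, Matrix.mul_smul]
  abel
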